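/- Let A be a multiring. For every prime cone P ⊆ A, the map σ_P : A → 3 defined by σ_P(a) = 1 if a ∈ P∖(-P), σ_P(a) = 0 if a ∈ P∩(-P), and σ_P(a) = -1 if a ∈ (-P)∖P, is a multiring morphism; conversely, for every multiring morphism σ : A → 3 the set σ⁻¹({0,1}) is a prime cone of A; and these two assignments are mutually inverse bijections between the set of prime cones of A and the set sper(A) of morphisms A → 3. -/
import Mathlib


universe u v

/-- A multiring: a commutative monoid with a multivalued addition. -/
class Multiring (A : Type u) extends CommMonoid A, Zero A, Neg A where
  /-- the multivalued sum: `madd b c` is the set `b + c` -/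
  madd : A → A → Set A
  madd_nonempty : ∀ a b : A, (madd a b).Nonempty
  madd_rev_left : ∀ a b c : A, a ∈ madd b c → c ∈ madd (-b) a
  madd_rev_right : ∀ a b c : A, a ∈ madd b c → b ∈ madd a (-c)
  mem_madd_zero : ∀ a b : A, a ∈ madd b 0 ↔ a = b
  madd_assoc : ∀ a b c g x : A, g ∈ madd a b → x ∈ madd g c →
    ∃ h ∈ madd b c, x ∈ madd a h
  madd_comm : ∀ a b : A, madd a b = madd b a
  mul_zero' : ∀ a : A, a * 0 = 0
  madd_mul : ∀ a b c d : A, a ∈ madd b c → a * d ∈ madd (b * d) (c * d)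

namespace Multiring

variable {A : Type u} [Multiring A]

/-- the iterated multivalued sum `x₁ + ⋯ + xₙ = {x₁} + (x₂ + ⋯ + xₙ)` of a list -/
def listSum : List A → Set A
  | [] => {(0 : A)}
  | a :: l => {x : A | ∃ y ∈ listSum l, x ∈ madd a y}

/-- an ideal of a multiring: a nonempty subset with `I + I ⊆ I` and `A·I ⊆ I` -/
def IsIdeal (I : Set A) : Prop :=
  I.Nonempty ∧ (∀ a ∈ I, ∀ b ∈ I, madd a b ⊆ I) ∧ ∀ a : A, ∀ b ∈ I, a * b ∈ I

/-- a prime ideal: a proper ideal such that `a*b ∈ p → a ∈ p ∨ b ∈ p` -/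
def IsPrimeIdeal (I : Set A) : Prop :=
  IsIdeal I ∧ (1 : A) ∉ I ∧ ∀ a b : A, a * b ∈ I → a ∈ I ∨ b ∈ I

/-- a maximal ideal: a proper ideal maximal among proper ideals -/
def IsMaximalIdeal (I : Set A) : Prop :=
  IsIdeal I ∧ (1 : A) ∉ I ∧ ∀ J : Set A, IsIdeal J → (1 : A) ∉ J → I ⊆ J → J = I

/-- a multiplicative subset -/
def IsMultiplicative (S : Set A) : Prop :=
  (1 : A) ∈ S ∧ ∀ s ∈ S, ∀ t ∈ S, s * t ∈ S

/-- a hyperring: a multiring with the strong distributivity property -/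
def IsHyperring (A : Type u) [Multiring A] : Prop :=
  ∀ x b c d : A, x ∈ madd (b * d) (c * d) → ∃ a ∈ madd b c, x = a * d

/-- a von Neumann (regular) hyperring -/
def IsVonNeumann (A : Type u) [Multiring A] : Prop :=
  IsHyperring A ∧ ∀ a : A, ∃ b : A, a = a * a * b

/-- the equivalence modulo an ideal `I`: `a ∼_I b` iff `(a + (-b)) ∩ I ≠ ∅`;
this is equality of classes in the quotient multiring `A/I`. -/
def simI (I : Set A) (a b : A) : Prop := ∃ x ∈ madd a (-b), x ∈ I

/-- membership of classes in the multivalued sum of the quotient `A/I`: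
`[a] ∈ [b] + [c]` iff `a ∈ b + c + i` for some `i ∈ I`. -/
def qmemI (I : Set A) (a b c : A) : Prop := ∃ i ∈ I, ∃ w ∈ madd c i, a ∈ madd b w

/-- representatives `x` with `[x] ∈ [c₁] + ⋯ + [cₙ]` in the quotient `A/I` -/
def qlistSumI (I : Set A) : List A → Set A
  | [] => {x : A | simI I x 0}
  | c :: l => {x : A | ∃ y ∈ qlistSumI I l, qmemI I x c y}

/-- the quotient multiring `A/I` is a multifield: `1 ≠ 0` and every nonzero
element is weak-invertible -/
def QuotIsMultifield (I : Set A) : Prop :=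
  ¬ simI I 1 0 ∧
    ∀ a : A, ¬ simI I a 0 →
      ∃ l : List A, l ≠ [] ∧ (1 : A) ∈ qlistSumI I (l.map fun b => a * b)

/-- the quotient multiring `A/I` is a hyperfield: `1 ≠ 0` and every nonzero
element is invertible -/
def QuotIsHyperfield (I : Set A) : Prop :=
  ¬ simI I 1 0 ∧ ∀ a : A, ¬ simI I a 0 → ∃ b : A, simI I (a * b) 1

/-- the Marshall equivalence associated to a multiplicative set `S`:
`a ∼_S b` iff `as = bt` for some `s,t ∈ S`; this is equality of classes in the
Marshall quotient `A/ₘS`. -/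
def simM (S : Set A) (a b : A) : Prop := ∃ s ∈ S, ∃ t ∈ S, a * s = b * t

/-- `S̄ = {x : xs ∈ S for some s ∈ S}` -/
def mbar (S : Set A) : Set A := {x : A | ∃ s ∈ S, x * s ∈ S}

/-- membership of classes in the multivalued sum of the Marshall quotient `A/ₘS`:
`[a] ∈ [b] + [c]` iff `as ∈ bt + cu` for some `s,t,u ∈ S`. -/
def qmemM (S : Set A) (a b c : A) : Prop :=
  ∃ s ∈ S, ∃ t ∈ S, ∃ u ∈ S, a * s ∈ madd (b * t) (c * u)

/-- representatives `x` with `[x] ∈ [c₁] + ⋯ + [cₙ]` in the Marshall quotient `A/ₘS` -/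
def qlistSumM (S : Set A) : List A → Set A
  | [] => {x : A | simM S x 0}
  | c :: l => {x : A | ∃ y ∈ qlistSumM S l, qmemM S x c y}

/-- the multivalued sum of the hyperfield `3 = {-1, 0, 1}` -/
def signAdd : SignType → SignType → Set SignType
  | SignType.zero, x => {x}
  | x, SignType.zero => {x}
  | SignType.pos, SignType.pos => {SignType.pos}
  | SignType.neg, SignType.neg => {SignType.neg}
  | _, _ => Set.univ

/-- a multiring morphism `A → 3`, i.e. an order of `A` -/
def IsSignMorphism (σ : A → SignType) : Prop :=
  (∀ a b c : A, a ∈ madd b c → σ a ∈ signAdd (σ b) (σ c)) ∧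
  (∀ a b : A, σ (a * b) = σ a * σ b) ∧
  (∀ a : A, σ (-a) = -(σ a)) ∧ σ 0 = 0 ∧ σ 1 = 1

/-- a prime cone of a multiring -/
def IsPrimeCone (P : Set A) : Prop :=
  (∀ a : A, a * a ∈ P) ∧ (∀ a ∈ P, ∀ b ∈ P, madd a b ⊆ P) ∧
  (∀ a ∈ P, ∀ b ∈ P, a * b ∈ P) ∧ (∀ a : A, a ∈ P ∨ -a ∈ P) ∧
  IsPrimeIdeal {x : A | x ∈ P ∧ -x ∈ P}

open Classical in
/-- the map `σ_P : A → 3` associated to a prime cone `P` -/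
noncomputable def sigmaOf (P : Set A) (a : A) : SignType :=
  if a ∈ P ∧ -a ∈ P then 0 else if a ∈ P then 1 else -1

/-- `ΣA²`: the set of elements lying in some finite sum of squares -/
def SumsOfSquares (A : Type u) [Multiring A] : Set A :=
  {x : A | ∃ l : List A, l ≠ [] ∧ x ∈ listSum (l.map fun a => a * a)}

/-- a multiring is semi-real when `-1 ∉ ΣA²` -/
def IsSemiReal (A : Type u) [Multiring A] : Prop := (-(1 : A)) ∉ SumsOfSquares A

/-- a real reduced multiring -/
def IsRealReduced (A : Type u) [Multiring A] : Prop :=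
  IsSemiReal A ∧ (∀ a : A, a * a * a = a) ∧
  (∀ a b : A, madd a (a * b * b) = {a}) ∧
  (∀ a b : A, ∃ c : A, madd (a * a) (b * b) = {c})

/-- a hyperfield: a hyperring with `1 ≠ 0` and all nonzero elements invertible -/
def IsHyperfield (A : Type u) [Multiring A] : Prop :=
  IsHyperring A ∧ (1 : A) ≠ 0 ∧ ∀ a : A, a ≠ 0 → ∃ b : A, a * b = 1

/-- a morphism of multirings -/
def IsMorphism {B : Type v} [Multiring B] (f : A → B) : Prop :=
  (∀ a b c : A, a ∈ madd b c → f a ∈ madd (f b) (f c)) ∧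
  (∀ a b : A, f (a * b) = f a * f b) ∧
  (∀ a : A, f (-a) = -(f a)) ∧ f 0 = 0 ∧ f 1 = 1

/-- the radical `√α = {x : xⁿ ∈ α for some n ≥ 1}` of an ideal -/
def radical (α : Set A) : Set A := {x : A | ∃ n : ℕ, 1 ≤ n ∧ x ^ n ∈ α}

/-- the ideal `(x) = ∪ {t₁x + ⋯ + tₙx}` generated by `x` -/
def genIdeal (x : A) : Set A :=
  {y : A | ∃ l : List A, l ≠ [] ∧ y ∈ listSum (l.map fun t => t * x)}

/-- `S_a = {x : aⁿ ∈ (x) for some n ≥ 0}` -/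
def Sgen (a : A) : Set A := {x : A | ∃ n : ℕ, a ^ n ∈ genIdeal x}

/-- `a` is weak-invertible when `1 ∈ ab₁ + ⋯ + abₙ` for some `b₁,…,bₙ` -/
def WeakInvertible (a : A) : Prop :=
  ∃ l : List A, l ≠ [] ∧ (1 : A) ∈ listSum (l.map fun b => a * b)

/-- the prime spectrum of a multiring -/
abbrev Spec (A : Type u) [Multiring A] : Type u := {p : Set A // IsPrimeIdeal p}

/-- the spectral topology on `spec A`, generated by the sets `D(a) = {p : a ∉ p}` -/
instance : TopologicalSpace (Spec A) :=
  TopologicalSpace.generateFrom {U : Set (Spec A) | ∃ a : A, U = {p : Spec A | a ∉ p.1}}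

/-- the Marshall quotient `A/ₘS` is a real reduced multiring (expressed on
representatives) -/
def QuotIsRealReduced (S : Set A) : Prop :=
  (∀ l : List A, l ≠ [] → (-(1 : A)) ∉ qlistSumM S (l.map fun a => a * a)) ∧
  (∀ a : A, simM S (a * a * a) a) ∧
  (∀ a b x : A, qmemM S x a (a * b * b) ↔ simM S x a) ∧
  (∀ a b : A, ∃ c : A, ∀ x : A, qmemM S x (a * a) (b * b) ↔ simM S x c)

/-- the Marshall quotient `A/ₘS` is a geometric von Neumann hyperring
(expressed on representatives): it is a hyperring, von Neumann regular, and
`e + eᶜ = {1}` for every idempotent `e` -/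
def QuotGeometricVN (S : Set A) : Prop :=
  (∀ x b c d : A, qmemM S x (b * d) (c * d) → ∃ a : A, qmemM S a b c ∧ simM S x (a * d)) ∧
  (∀ a : A, ∃ b : A, simM S a (a * a * b)) ∧
  (∀ e x : A, simM S (e * e) e → qmemM S x 1 (-e) → simM S (e * x) 0 →
    ∀ y : A, qmemM S y e x ↔ simM S y 1)

/-- a von Neumann subgroup: a multiplicative set such that for every idempotent
`a` (with complement `aᶜ`) and every `x ∈ D_S(a, aᶜ)` there is `s ∈ S` with `xs ∈ S` -/
def IsVNSubgroup (S : Set A) : Prop :=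
  IsMultiplicative S ∧
    ∀ a x ac : A, a * a = a → ac ∈ madd 1 (-a) → a * ac = 0 →
      (∃ u ∈ S, ∃ v ∈ S, ∃ w ∈ S, x * u ∈ madd (a * v) (ac * w)) →
      ∃ s ∈ S, x * s ∈ S

/-- a preorder of a multiring -/
def IsPreorderSet (T : Set A) : Prop :=
  (∀ a : A, a * a ∈ T) ∧ (∀ a ∈ T, ∀ b ∈ T, a * b ∈ T) ∧ (∀ a ∈ T, ∀ b ∈ T, madd a b ⊆ T)

/-- `1 + T = ∪ {1 + t : t ∈ T}` -/
def oneAdd (T : Set A) : Set A := {x : A | ∃ t ∈ T, x ∈ madd 1 t}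

/-- `ΣḞ²`: elements lying in some finite sum of squares of nonzero elements -/
def sumSqNonzero (A : Type u) [Multiring A] : Set A :=
  {x : A | ∃ l : List A, l ≠ [] ∧ (∀ a ∈ l, a ≠ 0) ∧ x ∈ listSum (l.map fun a => a * a)}

end Multiring

section Aux

namespace Multiring

variable {A : Type u} [Multiring A]

lemma zero_mem_neg_madd (a : A) : (0:A) ∈ madd (-a) a :=
  madd_rev_left a a 0 ((mem_madd_zero a a).mpr rfl)

lemma neg_neg'' (a : A) : -(-a) = a :=
  ((mem_madd_zero a (-(-a))).mp (madd_rev_left 0 (-a) a (zero_mem_neg_madd a))).symm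

lemma zero_mul'' (a : A) : (0:A) * a = 0 := by rw [mul_comm]; exact mul_zero' a

lemma neg_one_mul'' (a : A) : (-1 : A) * a = -a := by
  have h0 : (0:A) ∈ madd (-1) 1 := zero_mem_neg_madd 1
  have h1 := madd_mul 0 (-1) 1 a h0
  rw [zero_mul'', one_mul] at h1
  have h3 : a = -((-1:A)*a) := (mem_madd_zero _ _).mp (madd_rev_left 0 _ a h1)
  calc (-1:A)*a = -(-((-1:A)*a)) := (neg_neg'' _).symm
    _ = -a := by rw [← h3]

lemma neg_mul''' (a b : A) : -(a * b) = (-a) * b := by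
  rw [← neg_one_mul'' (a*b), ← neg_one_mul'' a, mul_assoc]

lemma neg_mul_neg'' (a b : A) : (-a) * (-b) = a * b := by
  rw [← neg_mul''' a (-b), mul_comm a (-b), ← neg_mul''' b a, neg_neg'', mul_comm]

lemma madd_neg' {a b c : A} (h : a ∈ madd b c) : -a ∈ madd (-b) (-c) := by
  have h1 := madd_mul a b c (-1) h
  rwa [mul_comm a, mul_comm b, mul_comm c, neg_one_mul'', neg_one_mul'', neg_one_mul''] at h1

lemma sigmaOf_zero_iff {P : Set A} {a : A} :
    sigmaOf P a = 0 ↔ a ∈ P ∧ -a ∈ P := by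
  unfold sigmaOf; split_ifs with h1 h2 <;> simp_all

lemma sigmaOf_pos_iff {P : Set A} {a : A} :
    sigmaOf P a = 1 ↔ a ∈ P ∧ -a ∉ P := by
  unfold sigmaOf; split_ifs with h1 h2 <;> simp_all

lemma sigmaOf_neg_iff {P : Set A} {a : A} :
    sigmaOf P a = -1 ↔ a ∉ P := by
  unfold sigmaOf; split_ifs with h1 h2 <;> simp_all

lemma sigmaOf_isSignMorphism {P : Set A} (hP : IsPrimeCone P) :
    IsSignMorphism (sigmaOf P) := by
  obtain ⟨hsq, hadd, hmul, htot, ⟨⟨hne, hpadd, hpmul⟩, h1p, hpr⟩⟩ := hP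
  have h0P : (0:A) ∈ P := by have := hsq 0; rwa [mul_zero'] at this
  have hn0 : (-0:A) = 0 :=
    ((mem_madd_zero 0 (-0)).mp (zero_mem_neg_madd (0:A))).symm
  have h1P : (1:A) ∈ P := by have := hsq 1; rwa [one_mul] at this
  have hn1 : (-1:A) ∉ P := fun h => h1p ⟨h1P, h⟩
  -- membership of setOf for the prime ideal
  have hmem : ∀ x : A, x ∈ {x : A | x ∈ P ∧ -x ∈ P} ↔ (x ∈ P ∧ -x ∈ P) :=
    fun x => Iff.rfl
  -- negation
  have hneg : ∀ a : A, sigmaOf P (-a) = -(sigmaOf P a) := by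
    intro a
    by_cases h1 : a ∈ P ∧ -a ∈ P
    · rw [sigmaOf_zero_iff.mpr h1,
        sigmaOf_zero_iff.mpr ⟨h1.2, by rw [neg_neg'']; exact h1.1⟩]
      rfl
    · by_cases h2 : a ∈ P
      · have hna : -a ∉ P := fun h => h1 ⟨h2, h⟩
        rw [sigmaOf_pos_iff.mpr ⟨h2, hna⟩, sigmaOf_neg_iff.mpr hna]
      · have hna : -a ∈ P := (htot a).resolve_left h2
        rw [sigmaOf_neg_iff.mpr h2,
          sigmaOf_pos_iff.mpr ⟨hna, by rw [neg_neg'']; exact h2⟩]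
        rfl
  -- claim A : positive + positive
  have claimA : ∀ a b c : A, a ∈ madd b c → b ∈ P → -b ∉ P → c ∈ P → -c ∉ P →
      a ∈ P ∧ -a ∉ P := by
    intro a b c h hb hnb hc hnc
    have haP : a ∈ P := hadd b hb c hc h
    refine ⟨haP, fun hna => ?_⟩
    have h2 : -a ∈ madd (-b) (-c) := madd_neg' h
    have h3 : -c ∈ madd (-(-b)) (-a) := madd_rev_left _ _ _ h2
    rw [neg_neg''] at h3
    exact hnc (hadd b hb (-a) hna h3)
  -- claim B : zero + positive
  have claimB : ∀ a b c : A, a ∈ madd b c → b ∈ P → -b ∈ P → c ∈ P → -c ∉ P →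
      a ∈ P ∧ -a ∉ P := by
    intro a b c h hb hnb hc hnc
    have haP : a ∈ P := hadd b hb c hc h
    refine ⟨haP, fun hna => ?_⟩
    have h3 : c ∈ madd (-b) a := madd_rev_left _ _ _ h
    have hcp : c ∈ {x : A | x ∈ P ∧ -x ∈ P} :=
      hpadd (-b) ⟨hnb, by rw [neg_neg'']; exact hb⟩ a ⟨haP, hna⟩ h3
    exact hnc hcp.2
  -- claim D : zero + negative
  have claimD : ∀ a b c : A, a ∈ madd b c → b ∈ P → -b ∈ P → c ∉ P → a ∉ P := by
    intro a b c h hb hnb hc ha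
    have h3 : c ∈ madd (-b) a := madd_rev_left _ _ _ h
    exact hc (hadd (-b) hnb a ha h3)
  refine ⟨?_, ?_, hneg, ?_, ?_⟩
  · -- additivity
    intro a b c h
    rcases htot b with hb | hb
    · by_cases hnb : -b ∈ P
      · -- σ b = 0
        rcases htot c with hc | hc
        · by_cases hnc : -c ∈ P
          · -- 0 + 0
            have : a ∈ {x : A | x ∈ P ∧ -x ∈ P} := hpadd b ⟨hb, hnb⟩ c ⟨hc, hnc⟩ h
            rw [sigmaOf_zero_iff.mpr ⟨hb, hnb⟩, sigmaOf_zero_iff.mpr ⟨hc, hnc⟩,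
              sigmaOf_zero_iff.mpr this]
            exact rfl
          · -- 0 + pos
            have := claimB a b c h hb hnb hc hnc
            rw [sigmaOf_zero_iff.mpr ⟨hb, hnb⟩, sigmaOf_pos_iff.mpr ⟨hc, hnc⟩,
              sigmaOf_pos_iff.mpr this]
            exact rfl
        · -- 0 + neg
          by_cases hcP : c ∈ P
          · have : a ∈ {x : A | x ∈ P ∧ -x ∈ P} := hpadd b ⟨hb, hnb⟩ c ⟨hcP, hc⟩ h
            rw [sigmaOf_zero_iff.mpr ⟨hb, hnb⟩, sigmaOf_zero_iff.mpr ⟨hcP, hc⟩,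
              sigmaOf_zero_iff.mpr this]
            exact rfl
          · have := claimD a b c h hb hnb hcP
            rw [sigmaOf_zero_iff.mpr ⟨hb, hnb⟩, sigmaOf_neg_iff.mpr hcP,
              sigmaOf_neg_iff.mpr this]
            exact rfl
      · -- σ b = 1
        rcases htot c with hc | hc
        · by_cases hnc : -c ∈ P
          · -- pos + 0
            rw [madd_comm] at h
            have := claimB a c b h hc hnc hb hnb
            rw [sigmaOf_pos_iff.mpr ⟨hb, hnb⟩, sigmaOf_zero_iff.mpr ⟨hc, hnc⟩,
              sigmaOf_pos_iff.mpr this]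
            exact rfl
          · -- pos + pos
            have := claimA a b c h hb hnb hc hnc
            rw [sigmaOf_pos_iff.mpr ⟨hb, hnb⟩, sigmaOf_pos_iff.mpr ⟨hc, hnc⟩,
              sigmaOf_pos_iff.mpr this]
            exact rfl
        · -- pos + neg : signAdd is univ
          by_cases hcP : c ∈ P
          · by_cases hnc : -c ∈ P
            ·
              rw [madd_comm] at h
              have := claimB a c b h hcP hnc hb hnb
              rw [sigmaOf_pos_iff.mpr ⟨hb, hnb⟩, sigmaOf_zero_iff.mpr ⟨hcP, hnc⟩,
                sigmaOf_pos_iff.mpr this]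
              exact rfl
            · -- pos + pos
              have := claimA a b c h hb hnb hcP hnc
              rw [sigmaOf_pos_iff.mpr ⟨hb, hnb⟩, sigmaOf_pos_iff.mpr ⟨hcP, hnc⟩,
                sigmaOf_pos_iff.mpr this]
              exact rfl
          · rw [sigmaOf_pos_iff.mpr ⟨hb, hnb⟩, sigmaOf_neg_iff.mpr hcP]
            exact Set.mem_univ _
    · -- -b ∈ P
      by_cases hbP : b ∈ P
      · by_cases hcP : c ∈ P
        · by_cases hnc : -c ∈ P
          · -- (0 or pos) + 0 : symmetric cases
            by_cases hnb2 : b ∈ P ∧ -b ∈ P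
            · have : a ∈ {x : A | x ∈ P ∧ -x ∈ P} := hpadd b hnb2 c ⟨hcP, hnc⟩ h
              rw [sigmaOf_zero_iff.mpr hnb2, sigmaOf_zero_iff.mpr ⟨hcP, hnc⟩,
                sigmaOf_zero_iff.mpr this]
              exact rfl
            · exact absurd ⟨hbP, hb⟩ hnb2
          · -- 0 + pos (since b ∈ P and -b ∈ P)
            have := claimB a b c h hbP hb hcP hnc
            rw [sigmaOf_zero_iff.mpr ⟨hbP, hb⟩, sigmaOf_pos_iff.mpr ⟨hcP, hnc⟩,
              sigmaOf_pos_iff.mpr this]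
            exact rfl
        · -- 0 + neg
          have := claimD a b c h hbP hb hcP
          rw [sigmaOf_zero_iff.mpr ⟨hbP, hb⟩, sigmaOf_neg_iff.mpr hcP,
            sigmaOf_neg_iff.mpr this]
          exact rfl
      · -- σ b = -1
        by_cases hcP : c ∈ P
        · by_cases hnc : -c ∈ P
          · -- neg + 0
            rw [madd_comm] at h
            have := claimD a c b h hcP hnc hbP
            rw [sigmaOf_neg_iff.mpr hbP, sigmaOf_zero_iff.mpr ⟨hcP, hnc⟩,
              sigmaOf_neg_iff.mpr this]
            exact rfl
          · -- neg + pos : univ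
            rw [sigmaOf_neg_iff.mpr hbP, sigmaOf_pos_iff.mpr ⟨hcP, hnc⟩]
            exact Set.mem_univ _
        · -- neg + neg
          have hnc : -c ∈ P := (htot c).resolve_left hcP
          have h2 : -a ∈ madd (-b) (-c) := madd_neg' h
          have hbn : -(-b) ∉ P := by rw [neg_neg'']; exact hbP
          have hcn : -(-c) ∉ P := by rw [neg_neg'']; exact hcP
          have := claimA (-a) (-b) (-c) h2 hb hbn hnc hcn
          have haP : a ∉ P := by rw [← neg_neg'' a]; exact this.2
          rw [sigmaOf_neg_iff.mpr hbP, sigmaOf_neg_iff.mpr hcP,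
            sigmaOf_neg_iff.mpr haP]
          exact rfl
  · -- multiplicativity
    intro a b
    by_cases hap : a ∈ P ∧ -a ∈ P
    · have : a * b ∈ {x : A | x ∈ P ∧ -x ∈ P} := by
        have := hpmul b a hap; rwa [mul_comm] at this
      rw [sigmaOf_zero_iff.mpr hap, sigmaOf_zero_iff.mpr this, zero_mul]
    · by_cases hbp : b ∈ P ∧ -b ∈ P
      · have : a * b ∈ {x : A | x ∈ P ∧ -x ∈ P} := hpmul a b hbp
        rw [sigmaOf_zero_iff.mpr hbp, sigmaOf_zero_iff.mpr this, mul_zero]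
      · have habp : ¬(a * b ∈ P ∧ -(a*b) ∈ P) := fun h => by
          rcases hpr a b h with h' | h'
          · exact hap h'
          · exact hbp h'
        by_cases haP : a ∈ P
        · have hna : -a ∉ P := fun h => hap ⟨haP, h⟩
          by_cases hbP : b ∈ P
          · have hnb : -b ∉ P := fun h => hbp ⟨hbP, h⟩
            have hmP : a * b ∈ P := hmul a haP b hbP
            rw [sigmaOf_pos_iff.mpr ⟨haP, hna⟩, sigmaOf_pos_iff.mpr ⟨hbP, hnb⟩,
              sigmaOf_pos_iff.mpr ⟨hmP, fun h => habp ⟨hmP, h⟩⟩]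
            rfl
          · have hnb : -b ∈ P := (htot b).resolve_left hbP
            have hmP : a * -b ∈ P := hmul a haP (-b) hnb
            have heq : a * -b = -(a * b) := by
              rw [mul_comm a (-b), ← neg_mul''' b a, mul_comm b a]
            rw [heq] at hmP
            have : a * b ∉ P := fun h => habp ⟨h, hmP⟩
            rw [sigmaOf_pos_iff.mpr ⟨haP, hna⟩, sigmaOf_neg_iff.mpr hbP,
              sigmaOf_neg_iff.mpr this]
            rfl
        · have hna : -a ∈ P := (htot a).resolve_left haP
          by_cases hbP : b ∈ P
          · have hnb : -b ∉ P := fun h => hbp ⟨hbP, h⟩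
            have hmP : -a * b ∈ P := hmul (-a) hna b hbP
            rw [← neg_mul'''] at hmP
            have : a * b ∉ P := fun h => habp ⟨h, hmP⟩
            rw [sigmaOf_neg_iff.mpr haP, sigmaOf_pos_iff.mpr ⟨hbP, hnb⟩,
              sigmaOf_neg_iff.mpr this]
            rfl
          · have hnb : -b ∈ P := (htot b).resolve_left hbP
            have hmP : -a * -b ∈ P := hmul (-a) hna (-b) hnb
            rw [neg_mul_neg''] at hmP
            have hnm : -(a*b) ∉ P := by
              intro h
              exact habp ⟨hmP, h⟩
            rw [sigmaOf_neg_iff.mpr haP, sigmaOf_neg_iff.mpr hbP,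
              sigmaOf_pos_iff.mpr ⟨hmP, hnm⟩]
            rfl
  · exact sigmaOf_zero_iff.mpr ⟨h0P, by rw [hn0]; exact h0P⟩
  · exact sigmaOf_pos_iff.mpr ⟨h1P, hn1⟩

lemma signMorphism_primeCone {σ : A → SignType} (hσ : IsSignMorphism σ) :
    IsPrimeCone {a : A | σ a = 0 ∨ σ a = 1} := by
  obtain ⟨hadd, hmul, hneg, h0, h1⟩ := hσ
  have hsetq : {x : A | x ∈ {a : A | σ a = 0 ∨ σ a = 1} ∧
      -x ∈ {a : A | σ a = 0 ∨ σ a = 1}} = {x : A | σ x = 0} := by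
    ext x
    simp only [Set.mem_setOf_eq, hneg]
    cases h : σ x <;> simp
  refine ⟨?_, ?_, ?_, ?_, ?_⟩
  · intro a
    cases h : σ a <;> simp only [Set.mem_setOf_eq, hmul, h] <;> [left; right; right] <;> rfl
  · rintro a (ha | ha) b (hb | hb) x hx <;>
      have key := hadd x a b hx <;> rw [ha, hb] at key <;>
      simp only [Set.mem_setOf_eq] <;>
      [skip; skip; skip; skip] <;>
      first
        | (left; simpa [signAdd] using key)
        | (right; simpa [signAdd] using key)
  · rintro a (ha | ha) b (hb | hb) <;> simp [Set.mem_setOf_eq, hmul, ha, hb]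
  · intro a
    cases h : σ a
    · exact Or.inl (Or.inl h)
    · refine Or.inr (Or.inr ?_)
      rw [hneg, h]; rfl
    · exact Or.inl (Or.inr h)
  · rw [hsetq]
    refine ⟨⟨⟨0, h0⟩, ?_, ?_⟩, ?_, ?_⟩
    · intro a ha b hb x hx
      have key := hadd x a b hx
      rw [Set.mem_setOf_eq] at ha hb
      rw [ha, hb] at key
      simpa [signAdd] using key
    · intro a b hb
      rw [Set.mem_setOf_eq] at hb ⊢
      rw [hmul, hb, mul_zero]
    · rw [Set.mem_setOf_eq, h1]; decide
    · intro a b hab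
      rw [Set.mem_setOf_eq] at hab ⊢
      rw [Set.mem_setOf_eq]
      rw [hmul] at hab
      rcases mul_eq_zero.mp hab with h | h
      · exact Or.inl h
      · exact Or.inr h

end Multiring

end Aux

/-- Prime cones of `A` correspond bijectively to multiring morphisms `A → 3`:
`P ↦ σ_P` and `σ ↦ σ⁻¹({0,1})` are mutually inverse. -/
theorem primeCone_signMorphism_bijection {A : Type u} [Multiring A] :
    (∀ P : Set A, Multiring.IsPrimeCone P →
      Multiring.IsSignMorphism (Multiring.sigmaOf P)) ∧
    (∀ σ : A → SignType, Multiring.IsSignMorphism σ →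
      Multiring.IsPrimeCone {a : A | σ a = 0 ∨ σ a = 1}) ∧
    (∀ P : Set A, Multiring.IsPrimeCone P →
      {a : A | Multiring.sigmaOf P a = 0 ∨ Multiring.sigmaOf P a = 1} = P) ∧
    (∀ σ : A → SignType, Multiring.IsSignMorphism σ →
      Multiring.sigmaOf {a : A | σ a = 0 ∨ σ a = 1} = σ) := by
  refine ⟨fun P hP => Multiring.sigmaOf_isSignMorphism hP,
    fun σ hσ => Multiring.signMorphism_primeCone hσ, ?_, ?_⟩
  · intro P hP
    obtain ⟨hsq, hadd, hmul, htot, hpi⟩ := hP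
    ext a
    simp only [Set.mem_setOf_eq]
    constructor
    · rintro (h | h)
      · exact (Multiring.sigmaOf_zero_iff.mp h).1
      · exact (Multiring.sigmaOf_pos_iff.mp h).1
    · intro ha
      by_cases h : -a ∈ P
      · exact Or.inl (Multiring.sigmaOf_zero_iff.mpr ⟨ha, h⟩)
      · exact Or.inr (Multiring.sigmaOf_pos_iff.mpr ⟨ha, h⟩)
  · intro σ hσ
    obtain ⟨hadd, hmul, hneg, h0, h1⟩ := hσ
    funext a
    cases h : σ a
    · rw [show (SignType.zero : SignType) = 0 from rfl]
      apply Multiring.sigmaOf_zero_iff.mpr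
      constructor
      · exact Or.inl h
      · rw [Set.mem_setOf_eq, hneg, h]
        left; rfl
    · rw [show (SignType.neg : SignType) = -1 from rfl]
      apply Multiring.sigmaOf_neg_iff.mpr
      rw [Set.mem_setOf_eq, h]
      decide
    · rw [show (SignType.pos : SignType) = 1 from rfl]
      apply Multiring.sigmaOf_pos_iff.mpr
      constructor
      · exact Or.inr h
      · rw [Set.mem_setOf_eq, hneg, h]
        decide
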